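/- Hoeffding lower-tail bound for the hypergeometric distribution: Let N ≥ 1, K ≤ N, n ≤ N, and let X be distributed according to the hypergeometric distribution with population size N, K marked items, and n draws, so that E[X] = (K/N)·n. Then for every real χ ≥ 0 with (K/N) − χ ≥ 0, the probability that X ≤ ((K/N) − χ)·n is at most exp(−2·χ²·n). -/

import Mathlib

open Finset

/-- The probability mass function of the hypergeometric distribution with
population size `N`, of which `K` are marked, and `n` draws without replacement:
`Pr[X = j] = (K choose j) · (N−K choose n−j) / (N choose n)`. -/
noncomputable def hypergeomPMF (N K n j : ℕ) : ℝ :=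
  ((K.choose j : ℝ) * ((N - K).choose (n - j) : ℝ)) / (N.choose n : ℝ)



lemma hg_core (p t : ℝ) (hp0 : 0 ≤ p) (hp1 : p ≤ 1) :
    1 - p + p * Real.exp t ≤ Real.exp (p * t + t ^ 2 / 8) := by
  set D : ℝ → ℝ := fun x => 1 - p + p * Real.exp x with hDdef
  have hDpos : ∀ x, 0 < D x := by
    intro x
    rcases hp0.lt_or_eq with h | h
    · have : 0 < p * Real.exp x := by positivity
      simp only [hDdef]; linarith
    · simp only [hDdef, ← h]; norm_num
  have hD : ∀ x, HasDerivAt D (p * Real.exp x) x := by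
    intro x
    exact ((Real.hasDerivAt_exp x).const_mul p).const_add (1 - p)
  set φ : ℝ → ℝ := fun x => p + x / 4 - p * Real.exp x / D x with hφdef
  have hφ : ∀ x, HasDerivAt φ
      (1 / 4 - (p * Real.exp x * D x - p * Real.exp x * (p * Real.exp x)) / (D x) ^ 2) x := by
    intro x
    have h1 : HasDerivAt (fun x : ℝ => p + x / 4) (1 / 4) x := by
      simpa using ((hasDerivAt_id x).div_const 4).const_add p
    have h2 : HasDerivAt (fun x => p * Real.exp x / D x)
        ((p * Real.exp x * D x - p * Real.exp x * (p * Real.exp x)) / (D x) ^ 2) x :=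
      ((Real.hasDerivAt_exp x).const_mul p).div (hD x) (hDpos x).ne'
    exact h1.sub h2
  have hφmono : Monotone φ := by
    refine monotone_of_hasDerivAt_nonneg hφ ?_
    intro x
    have hd := hDpos x
    have he : 0 < Real.exp x := Real.exp_pos x
    have hDx : D x = 1 - p + p * Real.exp x := rfl
    rw [Pi.zero_apply, sub_nonneg, div_le_iff₀ (by positivity)]
    nlinarith [sq_nonneg (1 - p - p * Real.exp x), mul_nonneg hp0 he.le]
  have hφ0 : φ 0 = 0 := by
    simp only [hφdef, hDdef]
    norm_num
  set h : ℝ → ℝ := fun x => p * x + x ^ 2 / 8 - Real.log (D x) with hhdef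
  have hh : ∀ x, HasDerivAt h (φ x) x := by
    intro x
    have h1 : HasDerivAt (fun x : ℝ => p * x + x ^ 2 / 8) (p + x / 4) x := by
      have := ((hasDerivAt_pow 2 x).div_const 8).const_add 0
      have h2 : HasDerivAt (fun x : ℝ => p * x) p x := by
        simpa using (hasDerivAt_id x).const_mul p
      have h3 : HasDerivAt (fun x : ℝ => x ^ 2 / 8) (x / 4) x := by
        have := (hasDerivAt_pow 2 x).div_const 8
        exact this.congr_deriv (by ring)
      exact h2.add h3
    have h2 : HasDerivAt (fun x => Real.log (D x)) (p * Real.exp x / D x) x :=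
      (hD x).log (hDpos x).ne'
    exact h1.sub h2
  have hnonneg : ∀ t, 0 ≤ h t := by
    intro t
    have h0 : h 0 = 0 := by
      simp only [hhdef, hDdef]; norm_num
    rcases le_total 0 t with ht | ht
    · have hmono : MonotoneOn h (Set.Ici 0) := by
        refine monotoneOn_of_hasDerivWithinAt_nonneg (convex_Ici 0)
          (fun x _ => (hh x).continuousAt.continuousWithinAt)
          (fun x hx => (hh x).hasDerivWithinAt) ?_
        intro x hx
        rw [interior_Ici] at hx
        have := hφmono (le_of_lt hx)
        rw [hφ0] at this
        exact this
      have := hmono Set.self_mem_Ici ht ht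
      rw [h0] at this; exact this
    · have hanti : AntitoneOn h (Set.Iic 0) := by
        refine antitoneOn_of_hasDerivWithinAt_nonpos (convex_Iic 0)
          (fun x _ => (hh x).continuousAt.continuousWithinAt)
          (fun x hx => (hh x).hasDerivWithinAt) ?_
        intro x hx
        rw [interior_Iic] at hx
        have := hφmono (le_of_lt hx)
        rw [hφ0] at this
        exact this
      have := hanti ht Set.self_mem_Iic ht
      rw [h0] at this; exact this
  have hlog : Real.log (D t) ≤ p * t + t ^ 2 / 8 := by
    have := hnonneg t
    simp only [hhdef] at this
    linarith
  calc 1 - p + p * Real.exp t = D t := rfl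
    _ = Real.exp (Real.log (D t)) := (Real.exp_log (hDpos t)).symm
    _ ≤ Real.exp (p * t + t ^ 2 / 8) := Real.exp_le_exp.mpr hlog


noncomputable def hgMgf (N K n : ℕ) (l : ℝ) : ℝ :=
  ∑ j ∈ Finset.range (n + 1), hypergeomPMF N K n j * Real.exp (l * j)

lemma hg_two_point (p u v l : ℝ) (hp0 : 0 ≤ p) (hp1 : p ≤ 1) (huv : (u - v) ^ 2 ≤ 1) :
    p * Real.exp (l * u) + (1 - p) * Real.exp (l * v)
      ≤ Real.exp (l * (p * u + (1 - p) * v) + l ^ 2 / 8) := by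
  have h1 := hg_core p (l * (u - v)) hp0 hp1
  have e1 : p * Real.exp (l * u) + (1 - p) * Real.exp (l * v)
      = Real.exp (l * v) * (1 - p + p * Real.exp (l * (u - v))) := by
    rw [show l * u = l * v + l * (u - v) by ring, Real.exp_add]; ring
  rw [e1]
  calc Real.exp (l * v) * (1 - p + p * Real.exp (l * (u - v)))
      ≤ Real.exp (l * v) * Real.exp (p * (l * (u - v)) + (l * (u - v)) ^ 2 / 8) :=
        mul_le_mul_of_nonneg_left h1 (Real.exp_nonneg _)
    _ = Real.exp (l * v + (p * (l * (u - v)) + (l * (u - v)) ^ 2 / 8)) := by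
        rw [← Real.exp_add]
    _ ≤ Real.exp (l * (p * u + (1 - p) * v) + l ^ 2 / 8) := by
        apply Real.exp_le_exp.mpr
        have h2 : (l * (u - v)) ^ 2 ≤ l ^ 2 := by
          have := sq_nonneg l
          calc (l * (u - v)) ^ 2 = l ^ 2 * (u - v) ^ 2 := by ring
            _ ≤ l ^ 2 * 1 := by nlinarith
            _ = l ^ 2 := by ring
        nlinarith

lemma hgMgf_zero_K (N n : ℕ) (hn : n ≤ N) (l : ℝ) : hgMgf N 0 n l = 1 := by
  unfold hgMgf hypergeomPMF
  rw [Finset.sum_eq_single_of_mem 0 (Finset.mem_range.mpr (Nat.succ_pos n))]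
  · have h : (0:ℝ) < (N.choose n : ℝ) := by exact_mod_cast Nat.choose_pos hn
    simp only [Nat.choose_zero_right, Nat.sub_zero, Nat.cast_one, one_mul, Nat.cast_zero,
      mul_zero, Real.exp_zero, mul_one]
    exact div_self h.ne'
  · intro j _ hj
    have : (0 : ℕ).choose j = 0 := Nat.choose_eq_zero_of_lt (Nat.pos_of_ne_zero hj)
    simp [this]

lemma hgMgf_full_K (N n : ℕ) (hn : n ≤ N) (l : ℝ) : hgMgf N N n l = Real.exp (l * n) := by
  unfold hgMgf hypergeomPMF
  rw [Finset.sum_eq_single_of_mem n (Finset.mem_range.mpr (Nat.lt_succ_self n))]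
  · have h : (0:ℝ) < (N.choose n : ℝ) := by exact_mod_cast Nat.choose_pos hn
    simp only [Nat.sub_self, Nat.choose_zero_right, Nat.cast_one, mul_one]
    rw [div_self h.ne', one_mul]
  · intro j hj hjn
    have hjlt : j < n := lt_of_le_of_ne (Nat.lt_succ_iff.mp (Finset.mem_range.mp hj)) hjn
    have h0 : (0:ℕ).choose (n - j) = 0 := Nat.choose_eq_zero_of_lt (by omega)
    simp [Nat.sub_self, h0]

lemma hgMgf_rec (Kp R n : ℕ) (hn : n ≤ Kp + R + 1) (l : ℝ) :
    hgMgf (Kp + R + 2) (Kp + 1) (n + 1) l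
      = ((Kp : ℝ) + 1) / ((Kp : ℝ) + R + 2) * Real.exp l * hgMgf (Kp + R + 1) Kp n l
        + ((R : ℝ) + 1) / ((Kp : ℝ) + R + 2) * hgMgf (Kp + R + 1) (Kp + 1) n l := by
  set S : ℝ := ∑ j ∈ Finset.range (n + 2),
    ((Kp + 1).choose j : ℝ) * ((R + 1).choose (n + 1 - j) : ℝ) * Real.exp (l * j) with hS
  set A : ℝ := ∑ i ∈ Finset.range (n + 1),
    (Kp.choose i : ℝ) * ((R + 1).choose (n - i) : ℝ) * Real.exp (l * i) with hA
  set B : ℝ := ∑ j ∈ Finset.range (n + 1),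
    ((Kp + 1).choose j : ℝ) * (R.choose (n - j) : ℝ) * Real.exp (l * j) with hB
  have key : ((n : ℝ) + 1) * S
      = ((Kp : ℝ) + 1) * Real.exp l * A + ((R : ℝ) + 1) * B := by
    have split : ((n : ℝ) + 1) * S
        = (∑ j ∈ Finset.range (n + 2), (j : ℝ) *
            (((Kp + 1).choose j : ℝ) * ((R + 1).choose (n + 1 - j) : ℝ) * Real.exp (l * j)))
          + (∑ j ∈ Finset.range (n + 2), ((n + 1 - j : ℕ) : ℝ) *
            (((Kp + 1).choose j : ℝ) * ((R + 1).choose (n + 1 - j) : ℝ) * Real.exp (l * j))) := by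
      rw [hS, Finset.mul_sum, ← Finset.sum_add_distrib]
      apply Finset.sum_congr rfl
      intro j hj
      have hj' : j ≤ n + 1 := Nat.lt_succ_iff.mp (Finset.mem_range.mp hj)
      have hcast : ((n + 1 - j : ℕ) : ℝ) = (n : ℝ) + 1 - (j : ℝ) := by
        push_cast [Nat.cast_sub hj']; ring
      rw [hcast]; ring
    have hS1 : (∑ j ∈ Finset.range (n + 2), (j : ℝ) *
          (((Kp + 1).choose j : ℝ) * ((R + 1).choose (n + 1 - j) : ℝ) * Real.exp (l * j)))
        = ((Kp : ℝ) + 1) * Real.exp l * A := by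
      rw [Finset.sum_range_succ']
      simp only [Nat.cast_zero, zero_mul, add_zero]
      rw [hA, Finset.mul_sum]
      apply Finset.sum_congr rfl
      intro i hi
      have hsub : n + 1 - (i + 1) = n - i := by omega
      have hnat := Nat.add_one_mul_choose_eq Kp i
      have hcast : ((Kp : ℝ) + 1) * (Kp.choose i : ℝ)
          = ((Kp + 1).choose (i + 1) : ℝ) * ((i : ℝ) + 1) := by exact_mod_cast hnat
      have hexp : Real.exp (l * ((i : ℕ) + 1 : ℕ)) = Real.exp (l * i) * Real.exp l := by
        rw [← Real.exp_add]; congr 1; push_cast; ring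
      rw [hsub, hexp]
      push_cast
      linear_combination (-(((R + 1).choose (n - i) : ℝ) * Real.exp (l * i) * Real.exp l)) * hcast
    have hS2 : (∑ j ∈ Finset.range (n + 2), ((n + 1 - j : ℕ) : ℝ) *
          (((Kp + 1).choose j : ℝ) * ((R + 1).choose (n + 1 - j) : ℝ) * Real.exp (l * j)))
        = ((R : ℝ) + 1) * B := by
      rw [Finset.sum_range_succ]
      simp only [Nat.sub_self, Nat.cast_zero, zero_mul, add_zero]
      rw [hB, Finset.mul_sum]
      apply Finset.sum_congr rfl
      intro j hj
      have hj' : j ≤ n := Nat.lt_succ_iff.mp (Finset.mem_range.mp hj)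
      have hsub : n + 1 - j = (n - j) + 1 := by omega
      have hnat := Nat.add_one_mul_choose_eq R (n - j)
      have hcast : ((R : ℝ) + 1) * (R.choose (n - j) : ℝ)
          = ((R + 1).choose ((n - j) + 1) : ℝ) * (((n - j : ℕ) : ℝ) + 1) := by exact_mod_cast hnat
      rw [hsub]
      push_cast
      linear_combination (-(((Kp + 1).choose j : ℝ) * Real.exp (l * j))) * hcast
    rw [split, hS1, hS2]
  have c1pos : (0 : ℝ) < ((Kp + R + 2).choose (n + 1) : ℝ) := by
    exact_mod_cast Nat.choose_pos (by omega)
  have c2pos : (0 : ℝ) < ((Kp + R + 1).choose n : ℝ) := by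
    exact_mod_cast Nat.choose_pos (by omega)
  have hcc : ((n : ℝ) + 1) * ((Kp + R + 2).choose (n + 1) : ℝ)
      = ((Kp : ℝ) + R + 2) * ((Kp + R + 1).choose n : ℝ) := by
    have := Nat.add_one_mul_choose_eq (Kp + R + 1) n
    have h2 : ((Kp + R + 2) * (Kp + R + 1).choose n : ℕ)
        = ((Kp + R + 2).choose (n + 1) * (n + 1) : ℕ) := this
    have := congrArg (Nat.cast (R := ℝ)) h2
    push_cast at this
    linarith
  have e1 : hgMgf (Kp + R + 2) (Kp + 1) (n + 1) l = S / ((Kp + R + 2).choose (n + 1) : ℝ) := by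
    rw [hS, Finset.sum_div]
    unfold hgMgf hypergeomPMF
    apply Finset.sum_congr rfl
    intro j hj
    rw [show Kp + R + 2 - (Kp + 1) = R + 1 from by omega]
    ring
  have e2 : hgMgf (Kp + R + 1) Kp n l = A / ((Kp + R + 1).choose n : ℝ) := by
    rw [hA, Finset.sum_div]
    unfold hgMgf hypergeomPMF
    apply Finset.sum_congr rfl
    intro i hi
    rw [show Kp + R + 1 - Kp = R + 1 from by omega]
    ring
  have e3 : hgMgf (Kp + R + 1) (Kp + 1) n l = B / ((Kp + R + 1).choose n : ℝ) := by
    rw [hB, Finset.sum_div]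
    unfold hgMgf hypergeomPMF
    apply Finset.sum_congr rfl
    intro j hj
    rw [show Kp + R + 1 - (Kp + 1) = R from by omega]
    ring
  rw [e1, e2, e3]
  have hden : ((Kp : ℝ) + R + 2) ≠ 0 := by positivity
  field_simp
  linear_combination ((Kp + R + 2).choose (n + 1) : ℝ) * key - S * hcc

lemma hgMgf_le (l : ℝ) : ∀ n N K : ℕ, 1 ≤ N → K ≤ N → n ≤ N →
    hgMgf N K n l ≤ Real.exp (l * ((K : ℝ) / N) * n + l ^ 2 * n / 8) := by
  intro n
  induction n with
  | zero =>
    intro N K hN hK hn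
    have h1 : hgMgf N K 0 l = 1 := by
      unfold hgMgf hypergeomPMF
      simp
    rw [h1]
    simp
  | succ n ih =>
    intro N K hN hK hn
    rcases Nat.eq_zero_or_pos K with hK0 | hKpos
    · subst hK0
      rw [hgMgf_zero_K N (n + 1) hn l]
      rw [show ((0 : ℕ) : ℝ) / N = 0 by simp]
      apply Real.one_le_exp
      simp only [mul_zero, zero_mul, zero_add]
      positivity
    rcases eq_or_lt_of_le hK with hKN | hKN
    · subst hKN
      rw [hgMgf_full_K K (n + 1) hn l]
      apply Real.exp_le_exp.mpr
      have h1 : (K : ℝ) / K = 1 := div_self (by positivity)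
      rw [h1]
      have h2 : (0:ℝ) ≤ l ^ 2 * ((n + 1 : ℕ) : ℝ) / 8 := by positivity
      linarith
    · obtain ⟨Kp, R, rfl, rfl⟩ : ∃ Kp R, K = Kp + 1 ∧ N = Kp + R + 2 :=
        ⟨K - 1, N - K - 1, by omega, by omega⟩
      have hnM : n ≤ Kp + R + 1 := by omega
      rw [hgMgf_rec Kp R n hnM l]
      have hM1 : (0:ℝ) < (Kp : ℝ) + R + 1 := by positivity
      have hM2 : (0:ℝ) < (Kp : ℝ) + R + 2 := by positivity
      set p : ℝ := ((Kp : ℝ) + 1) / ((Kp : ℝ) + R + 2) with hp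
      set a : ℝ := (Kp : ℝ) / ((Kp : ℝ) + R + 1) with ha
      set b : ℝ := ((Kp : ℝ) + 1) / ((Kp : ℝ) + R + 1) with hb
      have hp0 : 0 ≤ p := by positivity
      have hp1 : p ≤ 1 := by
        rw [hp, div_le_one hM2]; linarith
      have hq : ((R : ℝ) + 1) / ((Kp : ℝ) + R + 2) = 1 - p := by
        rw [hp]; field_simp; ring
      have IH1 := ih (Kp + R + 1) Kp (by omega) (by omega) hnM
      have IH2 := ih (Kp + R + 1) (Kp + 1) (by omega) (by omega) hnM
      have hcast1 : ((Kp : ℕ) : ℝ) / ((Kp + R + 1 : ℕ) : ℝ) = a := by push_cast [ha]; ring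
      have hcast2 : ((Kp + 1 : ℕ) : ℝ) / ((Kp + R + 1 : ℕ) : ℝ) = b := by push_cast [hb]; ring
      rw [hcast1] at IH1
      rw [hcast2] at IH2
      have hpe : 0 ≤ p * Real.exp l := by positivity
      have h1p : 0 ≤ 1 - p := by linarith
      have step1 : p * Real.exp l * hgMgf (Kp + R + 1) Kp n l
            + ((R : ℝ) + 1) / ((Kp : ℝ) + R + 2) * hgMgf (Kp + R + 1) (Kp + 1) n l
          ≤ p * Real.exp l * Real.exp (l * a * n + l ^ 2 * n / 8)
            + (1 - p) * Real.exp (l * b * n + l ^ 2 * n / 8) := by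
        rw [hq]
        exact add_le_add (mul_le_mul_of_nonneg_left IH1 hpe)
          (mul_le_mul_of_nonneg_left IH2 h1p)
      refine le_trans step1 ?_
      set u : ℝ := 1 + a * n with hu
      set v : ℝ := b * n with hv
      have huv : (u - v) ^ 2 ≤ 1 := by
        have heq : u - v = 1 - (n : ℝ) / ((Kp : ℝ) + R + 1) := by
          rw [hu, hv, ha, hb]; field_simp; ring
        have h0 : (0:ℝ) ≤ (n : ℝ) / ((Kp : ℝ) + R + 1) := by positivity
        have h1 : (n : ℝ) / ((Kp : ℝ) + R + 1) ≤ 1 := by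
          rw [div_le_one hM1]
          have : (n : ℝ) ≤ ((Kp + R + 1 : ℕ) : ℝ) := Nat.cast_le.mpr hnM
          push_cast at this; linarith
        nlinarith [heq]
      have htwo := hg_two_point p u v l hp0 hp1 huv
      have eL : Real.exp l * Real.exp (l * a * ↑n + l ^ 2 * ↑n / 8)
          = Real.exp (l ^ 2 * ↑n / 8) * Real.exp (l * u) := by
        rw [← Real.exp_add, ← Real.exp_add, hu]; congr 1; ring
      have eR : Real.exp (l * b * ↑n + l ^ 2 * ↑n / 8)
          = Real.exp (l ^ 2 * ↑n / 8) * Real.exp (l * v) := by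
        rw [← Real.exp_add, hv]; congr 1; ring
      have step2 : p * Real.exp l * Real.exp (l * a * ↑n + l ^ 2 * ↑n / 8)
            + (1 - p) * Real.exp (l * b * ↑n + l ^ 2 * ↑n / 8)
          = Real.exp (l ^ 2 * ↑n / 8) * (p * Real.exp (l * u) + (1 - p) * Real.exp (l * v)) := by
        rw [mul_assoc, eL, eR]; ring
      rw [step2]
      have hmean : p * u + (1 - p) * v = p * ((n : ℝ) + 1) := by
        rw [hu, hv, hp, ha, hb]; field_simp; ring
      calc Real.exp (l ^ 2 * ↑n / 8) * (p * Real.exp (l * u) + (1 - p) * Real.exp (l * v))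
          ≤ Real.exp (l ^ 2 * ↑n / 8) * Real.exp (l * (p * u + (1 - p) * v) + l ^ 2 / 8) :=
            mul_le_mul_of_nonneg_left htwo (Real.exp_nonneg _)
        _ = Real.exp (l ^ 2 * ↑n / 8 + (l * (p * ((n:ℝ)+1)) + l ^ 2 / 8)) := by
            rw [← Real.exp_add, hmean]
        _ ≤ Real.exp (l * (((Kp + 1 : ℕ) : ℝ) / ((Kp + R + 2 : ℕ) : ℝ)) * ((n + 1 : ℕ) : ℝ)
              + l ^ 2 * ((n + 1 : ℕ) : ℝ) / 8) := by
            apply Real.exp_le_exp.mpr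
            apply le_of_eq
            rw [hp]
            push_cast
            ring

/-- **Hoeffding lower-tail bound for the hypergeometric distribution**: if
`X ~ Hypergeometric(N, K, n)` (so `E[X] = (K/N)·n`) and `χ ≥ 0` with
`K/N − χ ≥ 0`, then `Pr[X ≤ ((K/N) − χ)·n] ≤ exp(−2χ²n)`. -/
theorem hypergeometric_lower_tail (N K n : ℕ) (hN : 1 ≤ N) (hK : K ≤ N) (hn : n ≤ N)
    (χ : ℝ) (hχ : 0 ≤ χ) (hχ' : 0 ≤ (K : ℝ) / N - χ) :
    (∑ j ∈ Finset.range (n + 1),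
        if (j : ℝ) ≤ ((K : ℝ) / N - χ) * n then hypergeomPMF N K n j else 0)
      ≤ Real.exp (-2 * χ ^ 2 * n) := by
  set l : ℝ := -4 * χ with hl
  set c : ℝ := ((K : ℝ) / N - χ) * n with hc
  have hl0 : l ≤ 0 := by rw [hl]; linarith
  have hpmf : ∀ j, 0 ≤ hypergeomPMF N K n j := by
    intro j; unfold hypergeomPMF; positivity
  have hterm : ∀ j ∈ Finset.range (n + 1),
      (if (j : ℝ) ≤ c then hypergeomPMF N K n j else 0)
        ≤ hypergeomPMF N K n j * Real.exp (l * j) * Real.exp (-(l * c)) := by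
    intro j _
    split_ifs with h
    · have h1 : 0 ≤ l * ((j : ℝ) - c) := by nlinarith [hl0, h]
      have h2 : (1 : ℝ) ≤ Real.exp (l * ((j : ℝ) - c)) := Real.one_le_exp h1
      have h3 : Real.exp (l * ((j : ℝ) - c)) = Real.exp (l * j) * Real.exp (-(l * c)) := by
        rw [← Real.exp_add]; congr 1; ring
      calc hypergeomPMF N K n j = hypergeomPMF N K n j * 1 := by ring
        _ ≤ hypergeomPMF N K n j * Real.exp (l * ((j : ℝ) - c)) :=
            mul_le_mul_of_nonneg_left h2 (hpmf j)
        _ = hypergeomPMF N K n j * Real.exp (l * j) * Real.exp (-(l * c)) := by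
            rw [h3]; ring
    · exact mul_nonneg (mul_nonneg (hpmf j) (Real.exp_nonneg _)) (Real.exp_nonneg _)
  calc (∑ j ∈ Finset.range (n + 1), if (j : ℝ) ≤ c then hypergeomPMF N K n j else 0)
      ≤ ∑ j ∈ Finset.range (n + 1),
          hypergeomPMF N K n j * Real.exp (l * j) * Real.exp (-(l * c)) :=
        Finset.sum_le_sum hterm
    _ = hgMgf N K n l * Real.exp (-(l * c)) := by
        rw [hgMgf, Finset.sum_mul]
    _ ≤ Real.exp (l * ((K : ℝ) / N) * n + l ^ 2 * n / 8) * Real.exp (-(l * c)) :=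
        mul_le_mul_of_nonneg_right (hgMgf_le l n N K hN hK hn) (Real.exp_nonneg _)
    _ = Real.exp (l * ((K : ℝ) / N) * n + l ^ 2 * n / 8 + -(l * c)) := by
        rw [← Real.exp_add]
    _ ≤ Real.exp (-2 * χ ^ 2 * n) := by
        apply Real.exp_le_exp.mpr
        apply le_of_eq
        rw [hl, hc]
        ring
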